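/- Let X be a finite set with |X| ≥ 2. There exist strictly positive probability distributions G, B on X and α ∈ (0,1] such that the function P ↦ D_{χ²}(P‖G) − α·D_{χ²}(P‖B) is not convex on the probability simplex, where D_{χ²}(P‖Q) = Σ_x Q(x)·((P(x)/Q(x)) − 1)² is the χ² divergence. -/
import Mathlib


open Finset

/-- For the χ² divergence, the difference-of-divergences objective need not be
convex on the simplex even for some `α ∈ (0,1]`. -/
theorem stmt14 {X : Type*} [Fintype X] (hX : 2 ≤ Fintype.card X) :
    ∃ (G B : X → ℝ) (α : ℝ),
      (∀ x, 0 < G x) ∧ (∀ x, 0 < B x)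
      ∧ (∑ x, G x = 1) ∧ (∑ x, B x = 1)
      ∧ 0 < α ∧ α ≤ 1
      ∧ ¬ ConvexOn ℝ {P : X → ℝ | (∀ x, 0 ≤ P x) ∧ ∑ x, P x = 1}
          (fun P => (∑ x, G x * (P x / G x - 1) ^ 2)
            - α * ∑ x, B x * (P x / B x - 1) ^ 2) := by
  classical
  obtain ⟨a, b, hab⟩ := Fintype.exists_pair_of_one_lt_card (by omega : 1 < Fintype.card X)
  set n : ℝ := (Fintype.card X : ℝ) with hn
  have hn2 : (2:ℝ) ≤ n := by rw [hn]; exact_mod_cast hX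
  have hnpos : 0 < n := by linarith
  have h4n : (0:ℝ) < 4*n := by linarith
  have hden : (0:ℝ) < 1 - 1/(4*n) := by
    rw [sub_pos, div_lt_one h4n]; linarith
  have hn1 : (0:ℝ) < n - 1 := by linarith
  set G : X → ℝ := fun _ => 1/n with hG
  set B : X → ℝ := fun x => if x = a then 1/(4*n) else (1 - 1/(4*n))/(n-1) with hB
  have hGpos : ∀ x, 0 < G x := fun x => by positivity
  have hBpos : ∀ x, 0 < B x := by
    intro x; simp only [hB]; split
    · positivity
    · positivity
  have hGsum : ∑ x, G x = 1 := by
    simp only [hG, Finset.sum_const, card_univ, nsmul_eq_mul]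
    rw [← hn]; field_simp
  have hcard : ((Fintype.card X - 1 : ℕ) : ℝ) = n - 1 := by
    rw [Nat.cast_sub (by omega), hn]; norm_num
  have hBsum : ∑ x, B x = 1 := by
    rw [← Finset.add_sum_erase _ B (mem_univ a)]
    have : ∑ x ∈ univ.erase a, B x = ∑ x ∈ univ.erase a, (1 - 1/(4*n))/(n-1) := by
      apply Finset.sum_congr rfl
      intro x hx
      simp only [hB, if_neg (Finset.mem_erase.mp hx).1]
    rw [this, Finset.sum_const, Finset.card_erase_of_mem (mem_univ a), card_univ,
      nsmul_eq_mul, hcard]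
    simp only [hB, if_pos rfl]
    field_simp
    ring
  refine ⟨G, B, 1, hGpos, hBpos, hGsum, hBsum, one_pos, le_refl 1, ?_⟩
  set c : X → ℝ := fun x => 1/G x - 1/B x with hc
  -- key identity: the objective equals ∑ c x * P x ^ 2
  have hkey : ∀ P : X → ℝ,
      (∑ x, G x * (P x / G x - 1) ^ 2) - 1 * ∑ x, B x * (P x / B x - 1) ^ 2
        = ∑ x, c x * (P x)^2 := by
    intro P
    rw [one_mul, ← Finset.sum_sub_distrib]
    have : ∀ x ∈ univ, G x * (P x / G x - 1) ^ 2 - B x * (P x / B x - 1) ^ 2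
        = c x * (P x)^2 + (G x - B x) := by
      intro x _
      have hGx := (hGpos x).ne'
      have hBx := (hBpos x).ne'
      simp only [hc]
      field_simp
      ring
    rw [Finset.sum_congr rfl this, Finset.sum_add_distrib, Finset.sum_sub_distrib,
      hGsum, hBsum]
    ring
  set P₀ : X → ℝ := fun x => if x = a then 1 else 0 with hP₀
  set P₁ : X → ℝ := fun x => if x = b then 1 else 0 with hP₁
  have hP₀mem : P₀ ∈ {P : X → ℝ | (∀ x, 0 ≤ P x) ∧ ∑ x, P x = 1} := by
    constructor
    · intro x; simp only [hP₀]; split <;> norm_num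
    · simp [hP₀]
  have hP₁mem : P₁ ∈ {P : X → ℝ | (∀ x, 0 ≤ P x) ∧ ∑ x, P x = 1} := by
    constructor
    · intro x; simp only [hP₁]; split <;> norm_num
    · simp [hP₁]
  have hortho : ∀ x, P₀ x * P₁ x = 0 := by
    intro x
    simp only [hP₀, hP₁]
    by_cases hx : x = a
    · subst hx; rw [if_neg hab]; ring
    · rw [if_neg hx]; ring
  have hs0 : ∑ x, c x * (P₀ x)^2 = c a := by
    have : ∀ x ∈ univ, c x * (P₀ x)^2 = if x = a then c x else 0 := by
      intro x _; simp only [hP₀]; split <;> ring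
    rw [Finset.sum_congr rfl this, Finset.sum_ite_eq' univ a c, if_pos (mem_univ a)]
  have hs1 : ∑ x, c x * (P₁ x)^2 = c b := by
    have : ∀ x ∈ univ, c x * (P₁ x)^2 = if x = b then c x else 0 := by
      intro x _; simp only [hP₁]; split <;> ring
    rw [Finset.sum_congr rfl this, Finset.sum_ite_eq' univ b c, if_pos (mem_univ b)]
  have hsmid : ∑ x, c x * (((1/2 : ℝ) • P₀ + (1/2 : ℝ) • P₁) x)^2
      = (1/4) * (c a + c b) := by
    have : ∀ x ∈ univ, c x * (((1/2 : ℝ) • P₀ + (1/2 : ℝ) • P₁) x)^2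
        = (1/4) * (c x * (P₀ x)^2) + (1/4) * (c x * (P₁ x)^2) := by
      intro x _
      have h0 := hortho x
      simp only [Pi.add_apply, Pi.smul_apply, smul_eq_mul]
      linear_combination (c x / 2) * h0
    rw [Finset.sum_congr rfl this, Finset.sum_add_distrib, ← Finset.mul_sum,
      ← Finset.mul_sum, hs0, hs1]
    ring
  -- numeric facts
  have hBa : B a = 1/(4*n) := by simp [hB]
  have hca : c a = n - 4*n := by
    simp only [hc, hG, hBa]
    rw [one_div_one_div, one_div_one_div]
  have hcb : c b < n := by
    have hBb : B b = (1 - 1/(4*n))/(n-1) := by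
      simp only [hB]; rw [if_neg (fun h => hab h.symm)]
    have : 0 < 1 / B b := by
      rw [hBb]; positivity
    simp only [hc, hG, one_div_one_div]
    linarith
  have hneg : c a + c b < 0 := by
    rw [hca]; linarith
  intro h
  have hineq := h.2 hP₀mem hP₁mem (by norm_num : (0:ℝ) ≤ 1/2) (by norm_num : (0:ℝ) ≤ 1/2)
    (by norm_num : (1/2 : ℝ) + 1/2 = 1)
  simp only [smul_eq_mul] at hineq
  rw [hkey, hkey, hkey, hs0, hs1, hsmid] at hineq
  have key : ∀ u v : ℝ, u + v < 0 → ¬ (1/4*(u+v) ≤ 1/2*u + 1/2*v) := by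
    intro u v h1 h2; linarith
  exact key (c a) (c b) hneg hineq
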